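/- Let E and G be finite nonempty sets, φ : E × G → E × G a bijection, λ > 0 and t ≥ 0. For m ≥ 1 define the bijection φ_m of E × G^m by applying φ successively to the state and the 1st, 2nd, …, m-th mark (φ_m = φ^{(m)} ∘ ⋯ ∘ φ^{(1)}, where φ^{(n)} acts as φ on the E-component and the n-th G-component and as the identity on the remaining components), and φ_0 = id. Consider the measurable space Ω = E × G^ℕ × [0,∞)^ℕ with probability measure ℙ = μ_E ⊗ μ_G^{⊗ℕ} ⊗ ν_λ^{⊗ℕ}, where μ_E and μ_G are the uniform probability measures on E and G and ν_λ is the exponential law with rate λ. Define ψ_t : Ω → Ω by ψ_t(i, (g_n)_{n≥1}, (e_n)_{n≥1}) = (i', (g'_n)_{n≥1}, (e_n)_{n≥1}), where m = #{n ≥ 1 : e_1 + ⋯ + e_n ≤ t} (finite ℙ-a.e.; set ψ_t = id where m is infinite), (i', g'_1, …, g'_m) = φ_m(i, g_1, …, g_m) and g'_n = g_n for n > m. Then ψ_t is measurable and measure-preserving: ℙ(ψ_t^{−1}(A)) = ℙ(A) for every measurable A ⊆ Ω, and the same holds for the analogously defined map built from φ^{−1}. -/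

import Mathlib

open MeasureTheory ProbabilityTheory

/-- Successive application of the interaction `φ` to the system state and the 1st, …, m-th
mark: `chainMap φ m = φ⁽ᵐ⁾ ∘ ⋯ ∘ φ⁽¹⁾`, where `φ⁽ⁿ⁾` acts as `φ` on the `E`-component and
the `n`-th `G`-component (index `n − 1` in the `0`-based sequence) and as the identity on
the remaining components. -/
def chainMap {E G : Type*} (φ : E × G → E × G) : ℕ → E × (ℕ → G) → E × (ℕ → G)
  | 0 => id
  | m + 1 => fun p =>
      let p' := chainMap φ m p
      let r := φ (p'.1, p'.2 m)
      (r.1, Function.update p'.2 m r.2)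

open Classical in
/-- The global evolution `ψ_t` on `Ω = E × G^ℕ × [0,∞)^ℕ` (represented as
`E × (ℕ → G) × (ℕ → ℝ)`, the sequences being `0`-based): with
`m = #{n ≥ 1 : e_1 + ⋯ + e_n ≤ t}` (if finite; `ψ_t = id` where it is infinite), the
state and the first `m` marks are transformed by `φ_m` and everything else is left
unchanged. -/
noncomputable def psiMap {E G : Type*} (φ : E × G → E × G) (t : ℝ) :
    E × (ℕ → G) × (ℕ → ℝ) → E × (ℕ → G) × (ℕ → ℝ) := fun ω =>
  if ({n : ℕ | ∑ i ∈ Finset.range (n + 1), ω.2.2 i ≤ t} : Set ℕ).Finite then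
    let m := ({n : ℕ | ∑ i ∈ Finset.range (n + 1), ω.2.2 i ≤ t} : Set ℕ).ncard
    ((chainMap φ m (ω.1, ω.2.1)).1, (chainMap φ m (ω.1, ω.2.1)).2, ω.2.2)
  else ω

/-- The type of a coordinate of `Ω = E × G^ℕ × ℝ^ℕ`, indexed by `Unit ⊕ ℕ ⊕ ℕ`. -/
def coordType (E G : Type) : Unit ⊕ ℕ ⊕ ℕ → Type
  | .inl _ => E
  | .inr (.inl _) => G
  | .inr (.inr _) => ℝ

/-- The coordinate maps of `Ω = E × G^ℕ × ℝ^ℕ`. -/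
def coordFun (E G : Type) :
    ∀ i : Unit ⊕ ℕ ⊕ ℕ, E × (ℕ → G) × (ℕ → ℝ) → coordType E G i
  | .inl _ => fun ω => ω.1
  | .inr (.inl n) => fun ω => ω.2.1 n
  | .inr (.inr n) => fun ω => ω.2.2 n

/-- The measurable structure on each coordinate of `Ω = E × G^ℕ × ℝ^ℕ`. -/
def coordMS (E G : Type) [MeasurableSpace E] [MeasurableSpace G] :
    ∀ i : Unit ⊕ ℕ ⊕ ℕ, MeasurableSpace (coordType E G i)
  | .inl _ => (inferInstance : MeasurableSpace E)
  | .inr (.inl _) => (inferInstance : MeasurableSpace G)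
  | .inr (.inr _) => (inferInstance : MeasurableSpace ℝ)

namespace Stmt12Aux

variable {E G : Type*}

lemma chainMap_apply_ge (φ : E × G → E × G) :
    ∀ (m : ℕ) (p : E × (ℕ → G)) (n : ℕ), m ≤ n → (chainMap φ m p).2 n = p.2 n := by
  intro m
  induction m with
  | zero => intro p n _; rfl
  | succ m ih =>
      intro p n hn
      show Function.update (chainMap φ m p).2 m _ n = p.2 n
      rw [Function.update_of_ne (by omega)]
      exact ih p n (by omega)

lemma chainMap_congr (φ : E × G → E × G) :
    ∀ (m : ℕ) (p q : E × (ℕ → G)), p.1 = q.1 → (∀ k < m, p.2 k = q.2 k) →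
      (chainMap φ m p).1 = (chainMap φ m q).1 ∧
      ∀ k < m, (chainMap φ m p).2 k = (chainMap φ m q).2 k := by
  intro m
  induction m with
  | zero => intro p q h1 _; exact ⟨h1, fun k hk => absurd hk (by omega)⟩
  | succ m ih =>
      intro p q h1 h2
      obtain ⟨ih1, ih2⟩ := ih p q h1 (fun k hk => h2 k (by omega))
      have hm : (chainMap φ m p).2 m = (chainMap φ m q).2 m := by
        rw [chainMap_apply_ge φ m p m le_rfl, chainMap_apply_ge φ m q m le_rfl]
        exact h2 m (by omega)
      have hr : φ ((chainMap φ m p).1, (chainMap φ m p).2 m)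
          = φ ((chainMap φ m q).1, (chainMap φ m q).2 m) := by rw [ih1, hm]
      constructor
      · show (φ ((chainMap φ m p).1, (chainMap φ m p).2 m)).1 = _
        rw [hr]; rfl
      · intro k hk
        show Function.update (chainMap φ m p).2 m _ k
            = Function.update (chainMap φ m q).2 m _ k
        rcases eq_or_ne k m with rfl | hne
        · rw [Function.update_self, Function.update_self, hr]
        · rw [Function.update_of_ne hne, Function.update_of_ne hne]
          exact ih2 k (by omega)

def chainInv (φ : (E × G) ≃ (E × G)) : ℕ → E × (ℕ → G) → E × (ℕ → G)
  | 0 => id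
  | m + 1 => fun q =>
      let r := φ.symm (q.1, q.2 m)
      chainInv φ m (r.1, Function.update q.2 m r.2)

lemma chainInv_apply_ge (φ : (E × G) ≃ (E × G)) :
    ∀ (m : ℕ) (q : E × (ℕ → G)) (n : ℕ), m ≤ n → (chainInv φ m q).2 n = q.2 n := by
  intro m
  induction m with
  | zero => intro q n _; rfl
  | succ m ih =>
      intro q n hn
      show (chainInv φ m _).2 n = q.2 n
      rw [ih _ n (by omega)]
      exact Function.update_of_ne (by omega) _ _

lemma chainInv_chainMap (φ : (E × G) ≃ (E × G)) :
    ∀ (m : ℕ) (p : E × (ℕ → G)), chainInv φ m (chainMap φ m p) = p := by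
  intro m
  induction m with
  | zero => intro p; rfl
  | succ m ih =>
      intro p
      show chainInv φ m _ = p
      set p' := chainMap φ m p with hp'
      have h1 : (Function.update p'.2 m (φ (p'.1, p'.2 m)).2) m = (φ (p'.1, p'.2 m)).2 := by
        rw [Function.update_self]
      show chainInv φ m
        ((φ.symm ((φ (p'.1, p'.2 m)).1, Function.update p'.2 m (φ (p'.1, p'.2 m)).2 m)).1,
          Function.update (Function.update p'.2 m (φ (p'.1, p'.2 m)).2) m
            (φ.symm ((φ (p'.1, p'.2 m)).1, Function.update p'.2 m (φ (p'.1, p'.2 m)).2 m)).2) = p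
      rw [h1]
      have h2 : ((φ (p'.1, p'.2 m)).1, (φ (p'.1, p'.2 m)).2) = φ (p'.1, p'.2 m) := rfl
      rw [h2, Equiv.symm_apply_apply, Function.update_idem, Function.update_eq_self]
      exact ih p

lemma chainMap_chainInv (φ : (E × G) ≃ (E × G)) :
    ∀ (m : ℕ) (q : E × (ℕ → G)), chainMap φ m (chainInv φ m q) = q := by
  intro m
  induction m with
  | zero => intro q; rfl
  | succ m ih =>
      intro q
      set r := φ.symm (q.1, q.2 m) with hr
      show (let p' := chainMap φ m (chainInv φ m (r.1, Function.update q.2 m r.2));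
        ((φ (p'.1, p'.2 m)).1, Function.update p'.2 m (φ (p'.1, p'.2 m)).2)) = q
      simp only [ih]
      have h1 : (Function.update q.2 m r.2) m = r.2 := Function.update_self _ _ _
      rw [h1]
      have h2 : (r.1, r.2) = r := rfl
      rw [h2, hr, Equiv.apply_symm_apply, Function.update_idem, Function.update_eq_self]

end Stmt12Aux

namespace Part2
variable {E G : Type*} [Nonempty G]

noncomputable def extFun (m : ℕ) (b : Fin m → G) : ℕ → G :=
  fun n => if h : n < m then b ⟨n, h⟩ else Classical.arbitrary G

noncomputable def finMap (φ : (E × G) ≃ (E × G)) (m : ℕ) :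
    E × (Fin m → G) → E × (Fin m → G) := fun p =>
  ((chainMap φ m (p.1, extFun m p.2)).1, fun k => (chainMap φ m (p.1, extFun m p.2)).2 k)

noncomputable def finMapInv (φ : (E × G) ≃ (E × G)) (m : ℕ) :
    E × (Fin m → G) → E × (Fin m → G) := fun q =>
  ((Stmt12Aux.chainInv φ m (q.1, extFun m q.2)).1,
    fun k => (Stmt12Aux.chainInv φ m (q.1, extFun m q.2)).2 k)

lemma extFun_lt {m : ℕ} (b : Fin m → G) {n : ℕ} (h : n < m) : extFun m b n = b ⟨n, h⟩ :=
  dif_pos h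

lemma extFun_ge {m : ℕ} (b : Fin m → G) {n : ℕ} (h : ¬ n < m) :
    extFun m b n = Classical.arbitrary G := dif_neg h

lemma finMapInv_finMap (φ : (E × G) ≃ (E × G)) (m : ℕ) (p : E × (Fin m → G)) :
    finMapInv φ m (finMap φ m p) = p := by
  obtain ⟨a, b⟩ := p
  simp only [finMap, finMapInv]
  have hext : extFun m (fun k : Fin m => (chainMap (⇑φ) m (a, extFun m b)).2 k)
      = (chainMap (⇑φ) m (a, extFun m b)).2 := by
    funext n
    by_cases h : n < m
    · rw [extFun_lt _ h]
    · rw [extFun_ge _ h, Stmt12Aux.chainMap_apply_ge (⇑φ) m _ n (by omega)]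
      exact (extFun_ge b h).symm
  rw [hext]
  have hpair : ((chainMap (⇑φ) m (a, extFun m b)).1, (chainMap (⇑φ) m (a, extFun m b)).2)
      = chainMap (⇑φ) m (a, extFun m b) := rfl
  rw [hpair, Stmt12Aux.chainInv_chainMap]
  exact Prod.ext rfl (funext fun k => extFun_lt b k.isLt)

lemma finMap_finMapInv (φ : (E × G) ≃ (E × G)) (m : ℕ) (q : E × (Fin m → G)) :
    finMap φ m (finMapInv φ m q) = q := by
  obtain ⟨a, b⟩ := q
  simp only [finMap, finMapInv]
  have hext : extFun m (fun k : Fin m => (Stmt12Aux.chainInv φ m (a, extFun m b)).2 k)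
      = (Stmt12Aux.chainInv φ m (a, extFun m b)).2 := by
    funext n
    by_cases h : n < m
    · rw [extFun_lt _ h]
    · rw [extFun_ge _ h, Stmt12Aux.chainInv_apply_ge φ m _ n (by omega)]
      exact (extFun_ge b h).symm
  rw [hext]
  have hpair : ((Stmt12Aux.chainInv φ m (a, extFun m b)).1,
      (Stmt12Aux.chainInv φ m (a, extFun m b)).2) = Stmt12Aux.chainInv φ m (a, extFun m b) := rfl
  rw [hpair, Stmt12Aux.chainMap_chainInv]
  exact Prod.ext rfl (funext fun k => extFun_lt b k.isLt)

noncomputable def finEquiv (φ : (E × G) ≃ (E × G)) (m : ℕ) :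
    (E × (Fin m → G)) ≃ (E × (Fin m → G)) where
  toFun := finMap φ m
  invFun := finMapInv φ m
  left_inv := finMapInv_finMap φ m
  right_inv := finMap_finMapInv φ m

lemma measurable_chainMap [Finite E] [Finite G] [MeasurableSpace E]
    [MeasurableSingletonClass E] [MeasurableSpace G] [MeasurableSingletonClass G]
    (φ : E × G → E × G) (m : ℕ) : Measurable (chainMap φ m) := by
  induction m with
  | zero => exact measurable_id
  | succ m ih =>
      have hφ : Measurable φ := measurable_of_finite φ
      have h2 : Measurable fun p : E × (ℕ → G) =>
          ((chainMap φ m p).1, (chainMap φ m p).2 m) :=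
        ih.fst.prodMk ((measurable_pi_apply m).comp ih.snd)
      have h3 : Measurable fun p : E × (ℕ → G) =>
          φ ((chainMap φ m p).1, (chainMap φ m p).2 m) := hφ.comp h2
      refine Measurable.prodMk h3.fst ?_
      rw [measurable_pi_iff]
      intro j
      by_cases hj : j = m
      · subst hj
        simpa [Function.update_self] using h3.snd
      · simp only [Function.update_of_ne hj]
        exact (measurable_pi_apply j).comp ih.snd

end Part2

namespace Part3

variable {E G : Type} [mE : MeasurableSpace E] [mG : MeasurableSpace G]

abbrev Om (E G : Type) := E × (ℕ → G) × (ℕ → ℝ)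

lemma measurable_coordFun : ∀ i, Measurable[_, coordMS E G i] (coordFun E G i)
  | .inl _ => measurable_fst
  | .inr (.inl n) => (measurable_pi_apply n).comp (measurable_fst.comp measurable_snd)
  | .inr (.inr n) => (measurable_pi_apply n).comp (measurable_snd.comp measurable_snd)

def boxSet (s : Finset (Unit ⊕ ℕ ⊕ ℕ)) (A : ∀ i, Set (coordType E G i)) : Set (Om E G) :=
  ⋂ i ∈ s, coordFun E G i ⁻¹' A i

lemma mem_boxSet {s : Finset (Unit ⊕ ℕ ⊕ ℕ)} {A : ∀ i, Set (coordType E G i)} {ω : Om E G} :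
    ω ∈ boxSet s A ↔ ∀ i ∈ s, coordFun E G i ω ∈ A i := by
  simp [boxSet]

def boxes (E G : Type) [MeasurableSpace E] [MeasurableSpace G] : Set (Set (Om E G)) :=
  { S | ∃ s A, (∀ i ∈ s, MeasurableSet[coordMS E G i] (A i)) ∧ S = boxSet s A }

lemma measurableSet_boxSet {s : Finset (Unit ⊕ ℕ ⊕ ℕ)} {A : ∀ i, Set (coordType E G i)}
    (hA : ∀ i ∈ s, MeasurableSet[coordMS E G i] (A i)) : MeasurableSet (boxSet s A) :=
  Finset.measurableSet_biInter s fun i hi => measurable_coordFun i (hA i hi)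

open Classical in
lemma isPiSystem_boxes : IsPiSystem (boxes E G) := by
  rintro S ⟨s₁, A₁, h₁, rfl⟩ T ⟨s₂, A₂, h₂, rfl⟩ -
  refine ⟨s₁ ∪ s₂, fun i => (if i ∈ s₁ then A₁ i else Set.univ) ∩
    (if i ∈ s₂ then A₂ i else Set.univ), fun i _ => ?_, ?_⟩
  · apply MeasurableSet.inter <;> split_ifs with h
    · exact h₁ i h
    · exact MeasurableSet.univ
    · exact h₂ i h
    · exact MeasurableSet.univ
  · ext ω
    simp only [Set.mem_inter_iff, mem_boxSet, Set.mem_preimage, Set.mem_inter_iff]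
    constructor
    · rintro ⟨hS, hT⟩ i hi
      constructor <;> split_ifs with h
      · exact hS i h
      · trivial
      · exact hT i h
      · trivial
    · intro h
      constructor
      · intro i hi
        have := (h i (Finset.mem_union_left _ hi)).1
        rwa [if_pos hi] at this
      · intro i hi
        have := (h i (Finset.mem_union_right _ hi)).2
        rwa [if_pos hi] at this

lemma single_box (i : Unit ⊕ ℕ ⊕ ℕ) (A : Set (coordType E G i))
    (hA : MeasurableSet[coordMS E G i] A) :
    coordFun E G i ⁻¹' A ∈ boxes E G := by
  -- build the dependent family by case analysis on i
  match i with
  | .inl u =>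
      refine ⟨{Sum.inl ()}, fun j => match j with
        | .inl _ => A
        | .inr (.inl _) => Set.univ
        | .inr (.inr _) => Set.univ, ?_, ?_⟩
      · rintro (⟨⟩ | j | j) _
        · exact hA
        · exact MeasurableSet.univ
        · exact MeasurableSet.univ
      · ext ω; cases u; simp [boxSet, coordFun]
  | .inr (.inl n) =>
      refine ⟨{Sum.inr (Sum.inl n)}, fun j => match j with
        | .inl _ => Set.univ
        | .inr (.inl k) => if k = n then A else Set.univ
        | .inr (.inr _) => Set.univ, ?_, ?_⟩
      · rintro (⟨⟩ | j | j) _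
        · exact MeasurableSet.univ
        · dsimp only; by_cases h : j = n
          · subst h; rw (config := {transparency := .default}) [if_pos rfl]; exact hA
          · rw (config := {transparency := .default}) [if_neg h]; exact MeasurableSet.univ
        · exact MeasurableSet.univ
      · ext ω; simp [boxSet, coordFun]
  | .inr (.inr n) =>
      refine ⟨{Sum.inr (Sum.inr n)}, fun j => match j with
        | .inl _ => Set.univ
        | .inr (.inl _) => Set.univ
        | .inr (.inr k) => if k = n then A else Set.univ, ?_, ?_⟩
      · rintro (⟨⟩ | j | j) _
        · exact MeasurableSet.univ
        · exact MeasurableSet.univ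
        · dsimp only; by_cases h : j = n
          · subst h; rw (config := {transparency := .default}) [if_pos rfl]; exact hA
          · rw (config := {transparency := .default}) [if_neg h]; exact MeasurableSet.univ
      · ext ω; simp [boxSet, coordFun]

lemma generateFrom_boxes :
    (inferInstance : MeasurableSpace (Om E G)) = MeasurableSpace.generateFrom (boxes E G) := by
  refine le_antisymm ?_ ?_
  · -- inst ≤ generateFrom boxes
    have key : ∀ i, (coordMS E G i).comap (coordFun E G i)
        ≤ MeasurableSpace.generateFrom (boxes E G) := by
      intro i
      rw [← measurable_iff_comap_le]
      intro A hA
      exact MeasurableSpace.measurableSet_generateFrom (single_box i A hA)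
    have hprod : (inferInstance : MeasurableSpace (Om E G))
        = mE.comap Prod.fst
          ⊔ ((MeasurableSpace.pi.comap (fun f : (ℕ → G) × (ℕ → ℝ) => f.1)
              ⊔ MeasurableSpace.pi.comap (fun f : (ℕ → G) × (ℕ → ℝ) => f.2)).comap
                (fun ω : Om E G => ω.2)) := rfl
    rw [hprod]
    refine sup_le ?_ ?_
    · exact key (Sum.inl ())
    · rw [MeasurableSpace.comap_sup]
      refine sup_le ?_ ?_
      · rw [MeasurableSpace.comap_comp, show MeasurableSpace.pi
          = ⨆ n : ℕ, mG.comap (fun f : ℕ → G => f n) from rfl,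
          MeasurableSpace.comap_iSup]
        refine iSup_le fun n => ?_
        rw [MeasurableSpace.comap_comp]
        exact key (Sum.inr (Sum.inl n))
      · rw [MeasurableSpace.comap_comp, show (MeasurableSpace.pi :
            MeasurableSpace (ℕ → ℝ))
          = ⨆ n : ℕ, (inferInstance : MeasurableSpace ℝ).comap (fun f : ℕ → ℝ => f n) from rfl,
          MeasurableSpace.comap_iSup]
        refine iSup_le fun n => ?_
        rw [MeasurableSpace.comap_comp]
        exact key (Sum.inr (Sum.inr n))
  · refine MeasurableSpace.generateFrom_le ?_
    rintro S ⟨s, A, hA, rfl⟩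
    exact measurableSet_boxSet hA

lemma ext_boxes {ν₁ ν₂ : Measure (Om E G)} [IsProbabilityMeasure ν₁] [IsProbabilityMeasure ν₂]
    (h : ∀ (s : Finset (Unit ⊕ ℕ ⊕ ℕ)) (A : ∀ i, Set (coordType E G i)),
      (∀ i ∈ s, MeasurableSet[coordMS E G i] (A i)) → ν₁ (boxSet s A) = ν₂ (boxSet s A)) :
    ν₁ = ν₂ := by
  refine ext_of_generate_finite _ generateFrom_boxes isPiSystem_boxes ?_ (by simp)
  rintro S ⟨s, A, hA, rfl⟩
  exact h s A hA

end Part3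

namespace Part4

open Part2 Part3

variable {E G : Type} [Fintype E] [Fintype G] [Nonempty E] [Nonempty G]
  [DecidableEq E] [DecidableEq G]
  [mE : MeasurableSpace E] [MeasurableSingletonClass E]
  [mG : MeasurableSpace G] [MeasurableSingletonClass G]

def thetaMap (φ : (E × G) ≃ (E × G)) (m : ℕ) : Om E G → Om E G := fun ω =>
  ((chainMap ⇑φ m (ω.1, ω.2.1)).1, (chainMap ⇑φ m (ω.1, ω.2.1)).2, ω.2.2)

lemma measurable_thetaMap (φ : (E × G) ≃ (E × G)) (m : ℕ) :
    Measurable (thetaMap φ m : Om E G → Om E G) := by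
  have c := Part2.measurable_chainMap (⇑φ) m
  have h0 : Measurable fun ω : Om E G => (ω.1, ω.2.1) :=
    measurable_fst.prodMk (measurable_fst.comp measurable_snd)
  exact (c.comp h0).fst.prodMk
    ((c.comp h0).snd.prodMk (measurable_snd.comp measurable_snd))

def partSet (m : ℕ) (a : E) (b : Fin m → G) : Set (Om E G) :=
  {ω | ω.1 = a ∧ ∀ k : Fin m, ω.2.1 k = b k}

lemma measurableSet_partSet (m : ℕ) (a : E) (b : Fin m → G) :
    MeasurableSet (partSet m a b : Set (Om E G)) := by
  have : (partSet m a b : Set (Om E G))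
      = (fun ω : Om E G => ω.1) ⁻¹' {a} ∩
        ⋂ k : Fin m, (fun ω : Om E G => ω.2.1 (k : ℕ)) ⁻¹' {b k} := by
    ext ω; simp [partSet]
  rw [this]
  refine (measurable_fst (measurableSet_singleton a)).inter ?_
  exact MeasurableSet.iInter fun k =>
    ((measurable_pi_apply _).comp (measurable_fst.comp measurable_snd))
      (measurableSet_singleton (b k))

def boxFam (m : ℕ) (a : E) (b : Fin m → G) (A : ∀ i, Set (coordType E G i)) :
    ∀ i, Set (coordType E G i)
  | .inl _ => ({a} : Set E)
  | .inr (.inl n) => if h : n < m then ({b ⟨n, h⟩} : Set G) else A (.inr (.inl n))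
  | .inr (.inr n) => A (.inr (.inr n))

lemma measurableSet_boxFam {m : ℕ} {a : E} {b : Fin m → G} {A : ∀ i, Set (coordType E G i)}
    {s : Finset (Unit ⊕ ℕ ⊕ ℕ)} (hA : ∀ i ∈ s, MeasurableSet[coordMS E G i] (A i)) :
    ∀ i ∈ s, MeasurableSet[coordMS E G i] (boxFam m a b A i) := by
  rintro (u | n | n) hi
  · exact measurableSet_singleton a
  · show MeasurableSet (if h : n < m then ({b ⟨n, h⟩} : Set G) else A (.inr (.inl n)))
    by_cases h : n < m
    · rw (config := {transparency := .default}) [dif_pos h]; exact measurableSet_singleton _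
    · rw (config := {transparency := .default}) [dif_neg h]; exact hA _ hi
  · exact hA _ hi

def condBox (A : ∀ i, Set (coordType E G i)) (m : ℕ) (p : E × (Fin m → G)) : Prop :=
  p.1 ∈ A (.inl ()) ∧ ∀ k : Fin m, p.2 k ∈ A (.inr (.inl (k : ℕ)))

lemma chain_on_part (φ : (E × G) ≃ (E × G)) {m : ℕ} {a : E} {b : Fin m → G} {ω : Om E G}
    (hω : ω ∈ partSet m a b) :
    (chainMap ⇑φ m (ω.1, ω.2.1)).1 = (finMap φ m (a, b)).1 ∧
    ∀ (k : ℕ) (hk : k < m), (chainMap ⇑φ m (ω.1, ω.2.1)).2 k = (finMap φ m (a, b)).2 ⟨k, hk⟩ := by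
  have h := Stmt12Aux.chainMap_congr (⇑φ) m (ω.1, ω.2.1) (a, extFun m b) hω.1
    (fun k hk => by
      show ω.2.1 k = extFun m b k
      rw [extFun_lt _ hk]; exact hω.2 ⟨k, hk⟩)
  exact ⟨h.1, fun k hk => h.2 k hk⟩

open Classical in
lemma box_inter_part {m : ℕ} {a : E} {b : Fin m → G} {A : ∀ i, Set (coordType E G i)}
    {s : Finset (Unit ⊕ ℕ ⊕ ℕ)}
    (hsE : Sum.inl () ∈ s) (hsG : ∀ k : ℕ, k < m → Sum.inr (Sum.inl k) ∈ s) :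
    boxSet s A ∩ partSet m a b
      = if condBox A m (a, b) then boxSet s (boxFam m a b A) else ∅ := by
  split_ifs with hc
  · ext ω
    simp only [Set.mem_inter_iff, mem_boxSet]
    constructor
    · rintro ⟨hbox, hpart⟩ i hi
      rcases i with u | n | n
      · exact hpart.1 ▸ rfl
      · show ω.2.1 n ∈ boxFam m a b A (.inr (.inl n))
        show ω.2.1 n ∈ if h : n < m then ({b ⟨n, h⟩} : Set G) else A (.inr (.inl n))
        by_cases h : n < m
        · rw (config := {transparency := .default}) [dif_pos h]; exact hpart.2 ⟨n, h⟩
        · rw (config := {transparency := .default}) [dif_neg h]; exact hbox _ hi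
      · exact hbox _ hi
    · intro h
      have hpart : ω ∈ partSet m a b := by
        refine ⟨h _ hsE, fun k => ?_⟩
        have h2 : ω.2.1 (k : ℕ) ∈ (if hh : (k : ℕ) < m then ({b ⟨(k : ℕ), hh⟩} : Set G)
            else A (.inr (.inl (k : ℕ)))) := h _ (hsG k k.isLt)
        rw (config := {transparency := .default}) [dif_pos k.isLt] at h2
        simpa using h2
      refine ⟨fun i hi => ?_, hpart⟩
      rcases i with u | n | n
      · cases u
        show ω.1 ∈ A (Sum.inl ())
        rw [hpart.1]; exact hc.1
      · by_cases hn : n < m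
        · have hb : ω.2.1 n = b ⟨n, hn⟩ := hpart.2 ⟨n, hn⟩
          show ω.2.1 n ∈ A (.inr (.inl n))
          rw [hb]; exact hc.2 ⟨n, hn⟩
        · have h2 : ω.2.1 n ∈ (if hh : n < m then ({b ⟨n, hh⟩} : Set G)
              else A (.inr (.inl n))) := h _ hi
          rw (config := {transparency := .default}) [dif_neg hn] at h2; exact h2
      · exact h _ hi
  · ext ω
    simp only [Set.mem_empty_iff_false, iff_false]
    rintro ⟨hbox, hpart⟩
    rw [mem_boxSet] at hbox
    refine hc ⟨?_, fun k => ?_⟩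
    · have h1 : ω.1 ∈ A (Sum.inl ()) := hbox _ hsE
      show a ∈ A (Sum.inl ())
      rwa [hpart.1] at h1
    · have h1 : ω.2.1 (k : ℕ) ∈ A (Sum.inr (Sum.inl (k : ℕ))) := hbox _ (hsG k k.isLt)
      show b k ∈ A (Sum.inr (Sum.inl (k : ℕ)))
      rwa [hpart.2 k] at h1

open Classical in
lemma theta_box_inter_part (φ : (E × G) ≃ (E × G)) {m : ℕ} {a : E} {b : Fin m → G}
    {A : ∀ i, Set (coordType E G i)} {s : Finset (Unit ⊕ ℕ ⊕ ℕ)}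
    (hsE : Sum.inl () ∈ s) (hsG : ∀ k : ℕ, k < m → Sum.inr (Sum.inl k) ∈ s) :
    (thetaMap φ m ⁻¹' boxSet s A) ∩ partSet m a b
      = if condBox A m (finMap φ m (a, b)) then boxSet s (boxFam m a b A) else ∅ := by
  split_ifs with hc
  · ext ω
    simp only [Set.mem_inter_iff, Set.mem_preimage, mem_boxSet]
    constructor
    · rintro ⟨hbox, hpart⟩ i hi
      obtain ⟨h1, h2⟩ := chain_on_part φ hpart
      rcases i with u | n | n
      · exact hpart.1 ▸ rfl
      · show ω.2.1 n ∈ (if h : n < m then ({b ⟨n, h⟩} : Set G) else A (.inr (.inl n)))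
        by_cases h : n < m
        · rw (config := {transparency := .default}) [dif_pos h]; exact hpart.2 ⟨n, h⟩
        · rw (config := {transparency := .default}) [dif_neg h]
          have h3 : coordFun E G (.inr (.inl n)) (thetaMap φ m ω) ∈ A (.inr (.inl n)) :=
            hbox _ hi
          have h4 : coordFun E G (.inr (.inl n)) (thetaMap φ m ω)
              = (chainMap (⇑φ) m (ω.1, ω.2.1)).2 n := rfl
          rwa [h4, Stmt12Aux.chainMap_apply_ge (⇑φ) m _ n (by omega)] at h3
      · exact hbox _ hi
    · intro h
      have hpart : ω ∈ partSet m a b := by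
        refine ⟨h _ hsE, fun k => ?_⟩
        have h2 : ω.2.1 (k : ℕ) ∈ (if hh : (k : ℕ) < m then ({b ⟨(k : ℕ), hh⟩} : Set G)
            else A (.inr (.inl (k : ℕ)))) := h _ (hsG k k.isLt)
        rw (config := {transparency := .default}) [dif_pos k.isLt] at h2
        simpa using h2
      obtain ⟨h1, h2⟩ := chain_on_part φ hpart
      refine ⟨fun i hi => ?_, hpart⟩
      rcases i with u | n | n
      · cases u
        show (chainMap (⇑φ) m (ω.1, ω.2.1)).1 ∈ A (Sum.inl ())
        rw [h1]; exact hc.1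
      · show (chainMap (⇑φ) m (ω.1, ω.2.1)).2 n ∈ A (.inr (.inl n))
        by_cases hn : n < m
        · rw [h2 n hn]; exact hc.2 ⟨n, hn⟩
        · rw [Stmt12Aux.chainMap_apply_ge (⇑φ) m _ n (by omega)]
          have h3 : ω.2.1 n ∈ (if hh : n < m then ({b ⟨n, hh⟩} : Set G)
              else A (.inr (.inl n))) := h _ hi
          rw (config := {transparency := .default}) [dif_neg hn] at h3; exact h3
      · exact h _ hi
  · ext ω
    simp only [Set.mem_empty_iff_false, iff_false]
    rintro ⟨hbox, hpart⟩
    rw [Set.mem_preimage, mem_boxSet] at hbox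
    obtain ⟨h1, h2⟩ := chain_on_part φ hpart
    refine hc ⟨?_, fun k => ?_⟩
    · have h3 : (chainMap (⇑φ) m (ω.1, ω.2.1)).1 ∈ A (Sum.inl ()) := hbox _ hsE
      rwa [h1] at h3
    · have h3 : (chainMap (⇑φ) m (ω.1, ω.2.1)).2 (k : ℕ) ∈ A (Sum.inr (Sum.inl (k : ℕ))) :=
        hbox _ (hsG k k.isLt)
      rw [h2 k k.isLt] at h3
      exact h3

lemma margE_singleton (μ : Measure (Om E G))
    (hmargE : Measure.map (fun ω : Om E G => ω.1) μ
      = (Fintype.card E : ENNReal)⁻¹ • Measure.count) (a : E) :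
    μ ((fun ω : Om E G => ω.1) ⁻¹' {a}) = (Fintype.card E : ENNReal)⁻¹ := by
  rw [← Measure.map_apply measurable_fst (measurableSet_singleton a), hmargE,
    Measure.smul_apply, Measure.count_singleton, smul_eq_mul, mul_one]

lemma margG_singleton (μ : Measure (Om E G))
    (hmargG : ∀ n : ℕ, Measure.map (fun ω : Om E G => ω.2.1 n) μ
      = (Fintype.card G : ENNReal)⁻¹ • Measure.count) (n : ℕ) (g : G) :
    μ ((fun ω : Om E G => ω.2.1 n) ⁻¹' {g}) = (Fintype.card G : ENNReal)⁻¹ := by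
  have hm : Measurable fun ω : Om E G => ω.2.1 n :=
    (measurable_pi_apply n).comp (measurable_fst.comp measurable_snd)
  rw [← Measure.map_apply hm (measurableSet_singleton g), hmargG n, Measure.smul_apply, Measure.count_singleton,
    smul_eq_mul, mul_one]

lemma kappa_const (μ : Measure (Om E G))
    (hindep : iIndepFun (m := coordMS E G) (coordFun E G) μ)
    (hmargE : Measure.map (fun ω : Om E G => ω.1) μ
      = (Fintype.card E : ENNReal)⁻¹ • Measure.count)
    (hmargG : ∀ n : ℕ, Measure.map (fun ω : Om E G => ω.2.1 n) μ
      = (Fintype.card G : ENNReal)⁻¹ • Measure.count)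
    {m : ℕ} {s : Finset (Unit ⊕ ℕ ⊕ ℕ)} {A : ∀ i, Set (coordType E G i)}
    (hA : ∀ i ∈ s, MeasurableSet[coordMS E G i] (A i))
    (a a' : E) (b b' : Fin m → G) :
    μ (boxSet s (boxFam m a b A)) = μ (boxSet s (boxFam m a' b' A)) := by
  rw [show (boxSet s (boxFam m a b A) : Set (Om E G))
      = ⋂ i ∈ s, coordFun E G i ⁻¹' (boxFam m a b A) i from rfl,
    hindep.measure_inter_preimage_eq_mul s (measurableSet_boxFam hA),
    show (boxSet s (boxFam m a' b' A) : Set (Om E G))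
      = ⋂ i ∈ s, coordFun E G i ⁻¹' (boxFam m a' b' A) i from rfl,
    hindep.measure_inter_preimage_eq_mul s (measurableSet_boxFam hA)]
  refine Finset.prod_congr rfl ?_
  rintro (u | n | n) hi
  · cases u
    show μ ((fun ω : Om E G => ω.1) ⁻¹' {a}) = μ ((fun ω : Om E G => ω.1) ⁻¹' {a'})
    rw [margE_singleton μ hmargE a, margE_singleton μ hmargE a']
  · show μ ((fun ω : Om E G => ω.2.1 n) ⁻¹'
        (if h : n < m then ({b ⟨n, h⟩} : Set G) else A (.inr (.inl n))))
      = μ ((fun ω : Om E G => ω.2.1 n) ⁻¹'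
        (if h : n < m then ({b' ⟨n, h⟩} : Set G) else A (.inr (.inl n))))
    by_cases hn : n < m
    · rw (config := {transparency := .default}) [dif_pos hn, dif_pos hn, margG_singleton μ hmargG, margG_singleton μ hmargG]
    · rw (config := {transparency := .default}) [dif_neg hn, dif_neg hn]
  · rfl

lemma measure_eq_sum_part (μ : Measure (Om E G)) (m : ℕ) {X : Set (Om E G)}
    (hX : MeasurableSet X) :
    μ X = ∑ p : E × (Fin m → G), μ (X ∩ partSet m p.1 p.2) := by
  have hcover : (⋃ p : E × (Fin m → G), (X ∩ partSet m p.1 p.2)) = X := by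
    ext ω
    constructor
    · rintro ⟨S, ⟨p, rfl⟩, hS⟩
      exact hS.1
    · intro hω
      exact Set.mem_iUnion.2 ⟨(ω.1, fun k => ω.2.1 k), hω, rfl, fun k => rfl⟩
  have hdisj : Pairwise (Function.onFun Disjoint
      fun p : E × (Fin m → G) => X ∩ partSet m p.1 p.2) := by
    intro p q hpq
    refine Set.disjoint_left.2 fun ω hωp hωq => hpq ?_
    have h1 := hωp.2
    have h2 := hωq.2
    refine Prod.ext (h1.1 ▸ h2.1.symm ▸ rfl) ?_
    funext k
    rw [← h1.2 k, ← h2.2 k]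
  have hmeas : ∀ p : E × (Fin m → G), MeasurableSet (X ∩ partSet m p.1 p.2) :=
    fun p => hX.inter (measurableSet_partSet m p.1 p.2)
  conv_lhs => rw [← hcover]
  rw [measure_iUnion hdisj hmeas, tsum_fintype]

open Classical in
lemma thetaMap_measurePreserving (φ : (E × G) ≃ (E × G)) (m : ℕ)
    (μ : Measure (Om E G)) [IsProbabilityMeasure μ]
    (hindep : iIndepFun (m := coordMS E G) (coordFun E G) μ)
    (hmargE : Measure.map (fun ω : Om E G => ω.1) μ
      = (Fintype.card E : ENNReal)⁻¹ • Measure.count)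
    (hmargG : ∀ n : ℕ, Measure.map (fun ω : Om E G => ω.2.1 n) μ
      = (Fintype.card G : ENNReal)⁻¹ • Measure.count) :
    MeasurePreserving (thetaMap φ m) μ μ := by
  refine ⟨measurable_thetaMap φ m, ?_⟩
  have : IsProbabilityMeasure (μ.map (thetaMap φ m)) :=
    Measure.isProbabilityMeasure_map (measurable_thetaMap φ m).aemeasurable
  refine Part3.ext_boxes ?_
  intro s A hA
  classical
  set s' : Finset (Unit ⊕ ℕ ⊕ ℕ) := insert (Sum.inl ())
      (s ∪ (Finset.range m).image (fun k => Sum.inr (Sum.inl k))) with hs'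
  have hsub : s ⊆ s' := fun i hi =>
    Finset.mem_insert_of_mem (Finset.mem_union_left _ hi)
  set A' : ∀ i, Set (coordType E G i) := fun i => if i ∈ s then A i else Set.univ with hA'def
  have hbox_eq : (boxSet s A : Set (Om E G)) = boxSet s' A' := by
    ext ω
    simp only [mem_boxSet]
    constructor
    · intro h i hi
      show coordFun E G i ω ∈ if i ∈ s then A i else Set.univ
      split_ifs with hin
      · exact h i hin
      · trivial
    · intro h i hi
      have h2 : coordFun E G i ω ∈ (if i ∈ s then A i else Set.univ) := h i (hsub hi)
      rwa [if_pos hi] at h2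
  have hA' : ∀ i ∈ s', MeasurableSet[coordMS E G i] (A' i) := by
    intro i _
    show MeasurableSet[coordMS E G i] (if i ∈ s then A i else Set.univ)
    split_ifs with h
    · exact hA i h
    · exact MeasurableSet.univ
  have hsE : Sum.inl () ∈ s' := Finset.mem_insert_self _ _
  have hsG : ∀ k : ℕ, k < m → Sum.inr (Sum.inl k) ∈ s' := fun k hk =>
    Finset.mem_insert_of_mem (Finset.mem_union_right _
      (Finset.mem_image_of_mem _ (Finset.mem_range.2 hk)))
  rw [hbox_eq, Measure.map_apply (measurable_thetaMap φ m) (measurableSet_boxSet hA')]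
  have hθmeas : MeasurableSet (thetaMap φ m ⁻¹' boxSet s' A') :=
    measurable_thetaMap φ m (measurableSet_boxSet hA')
  rw [measure_eq_sum_part μ m hθmeas, measure_eq_sum_part μ m (measurableSet_boxSet hA')]
  obtain ⟨a₀⟩ := (inferInstance : Nonempty E)
  set b₀ : Fin m → G := fun _ => Classical.arbitrary G with hb₀
  set κ0 := μ (boxSet s' (boxFam m a₀ b₀ A')) with hκ0
  have hL : ∀ p : E × (Fin m → G),
      μ ((thetaMap φ m ⁻¹' boxSet s' A') ∩ partSet m p.1 p.2)
        = if condBox A' m (finEquiv φ m p) then κ0 else 0 := by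
    intro p
    rw [theta_box_inter_part φ hsE hsG]
    split_ifs with h1 h2 h2
    · exact kappa_const μ hindep hmargE hmargG hA' p.1 a₀ p.2 b₀
    · exact absurd h1 h2
    · exact absurd h2 h1
    · exact measure_empty
  have hR : ∀ p : E × (Fin m → G),
      μ (boxSet s' A' ∩ partSet m p.1 p.2) = if condBox A' m p then κ0 else 0 := by
    intro p
    rw [box_inter_part hsE hsG]
    split_ifs with h1
    · exact kappa_const μ hindep hmargE hmargG hA' p.1 a₀ p.2 b₀
    · exact measure_empty
  calc ∑ p : E × (Fin m → G), μ ((thetaMap φ m ⁻¹' boxSet s' A') ∩ partSet m p.1 p.2)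
      = ∑ p : E × (Fin m → G), if condBox A' m (finEquiv φ m p) then κ0 else 0 :=
        Finset.sum_congr rfl fun p _ => hL p
    _ = ∑ q : E × (Fin m → G), if condBox A' m q then κ0 else 0 :=
        Equiv.sum_comp (finEquiv φ m) (fun q => if condBox A' m q then κ0 else 0)
    _ = ∑ p : E × (Fin m → G), μ (boxSet s' A' ∩ partSet m p.1 p.2) :=
        (Finset.sum_congr rfl fun p _ => hR p).symm

end Part4

namespace Part5

open Part2 Part3 Part4

variable {E G : Type} [Fintype E] [Fintype G] [Nonempty E] [Nonempty G]
  [DecidableEq E] [DecidableEq G]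
  [mE : MeasurableSpace E] [MeasurableSingletonClass E]
  [mG : MeasurableSpace G] [MeasurableSingletonClass G]

def Sset (t : ℝ) (ω : Om E G) : Set ℕ :=
  {n : ℕ | ∑ i ∈ Finset.range (n + 1), ω.2.2 i ≤ t}

def TSet (t : ℝ) (m : ℕ) : Set (Om E G) :=
  {ω | (Sset t ω).Finite ∧ (Sset t ω).ncard = m}

def TInf (t : ℝ) : Set (Om E G) := {ω | ¬ (Sset t ω).Finite}

lemma measurableSet_SsetEq (t : ℝ) (F : Finset ℕ) :
    MeasurableSet {ω : Om E G | Sset t ω = ↑F} := by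
  have hM : ∀ n : ℕ, MeasurableSet {ω : Om E G | ∑ i ∈ Finset.range (n + 1), ω.2.2 i ≤ t} := by
    intro n
    have : Measurable fun ω : Om E G => ∑ i ∈ Finset.range (n + 1), ω.2.2 i :=
      Finset.measurable_sum _ fun i _ =>
        (measurable_pi_apply i).comp (measurable_snd.comp measurable_snd)
    exact measurableSet_le this measurable_const
  have heq : {ω : Om E G | Sset t ω = ↑F}
      = ⋂ n : ℕ, (if n ∈ F then {ω : Om E G | ∑ i ∈ Finset.range (n + 1), ω.2.2 i ≤ t}
          else {ω : Om E G | ∑ i ∈ Finset.range (n + 1), ω.2.2 i ≤ t}ᶜ) := by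
    ext ω
    simp only [Set.mem_setOf_eq, Set.mem_iInter]
    constructor
    · intro h n
      have h2 : (n ∈ Sset t ω) ↔ n ∈ F := by rw [h]; simp
      split_ifs with hn
      · exact h2.2 hn
      · exact fun hc => hn (h2.1 hc)
    · intro h
      ext n
      have h2 := h n
      simp only [Finset.coe_sort_coe, Finset.mem_coe]
      constructor
      · intro hn
        by_contra hnF
        rw [if_neg hnF] at h2
        exact h2 hn
      · intro hn
        rw [if_pos hn] at h2
        exact h2
  rw [heq]
  exact MeasurableSet.iInter fun n => by
    split_ifs with hn
    · exact hM n
    · exact (hM n).compl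

lemma TSet_eq_iUnion (t : ℝ) (m : ℕ) :
    (TSet t m : Set (Om E G))
      = ⋃ (F : Finset ℕ) (_ : F.card = m), {ω : Om E G | Sset t ω = ↑F} := by
  ext ω
  simp only [Set.mem_iUnion, Set.mem_setOf_eq]
  constructor
  · rintro ⟨hfin, hcard⟩
    refine ⟨hfin.toFinset, ?_, ?_⟩
    · rw [← hcard, Set.ncard_eq_toFinset_card _ hfin]
    · exact hfin.coe_toFinset.symm
  · rintro ⟨F, hcard, hF⟩
    refine ⟨hF ▸ F.finite_toSet, ?_⟩
    rw [hF, Set.ncard_coe_finset, hcard]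

lemma measurableSet_TSet (t : ℝ) (m : ℕ) : MeasurableSet (TSet t m : Set (Om E G)) := by
  rw [TSet_eq_iUnion]
  exact MeasurableSet.iUnion fun F => MeasurableSet.iUnion fun _ => measurableSet_SsetEq t F

lemma finite_part_eq_iUnion (t : ℝ) :
    {ω : Om E G | (Sset t ω).Finite} = ⋃ m : ℕ, TSet t m := by
  ext ω
  simp only [Set.mem_setOf_eq, Set.mem_iUnion]
  constructor
  · intro h; exact ⟨(Sset t ω).ncard, h, rfl⟩
  · rintro ⟨m, hm, _⟩; exact hm

lemma measurableSet_TInf (t : ℝ) : MeasurableSet (TInf t : Set (Om E G)) := by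
  have : (TInf t : Set (Om E G)) = {ω : Om E G | (Sset t ω).Finite}ᶜ := rfl
  rw [this, finite_part_eq_iUnion]
  exact (MeasurableSet.iUnion fun m => measurableSet_TSet t m).compl

lemma psi_eq_theta (φ : (E × G) ≃ (E × G)) {t : ℝ} {m : ℕ} {ω : Om E G}
    (hω : ω ∈ TSet t m) : psiMap (⇑φ) t ω = thetaMap φ m ω := by
  obtain ⟨hfin, hcard⟩ := hω
  have h1 : ({n : ℕ | ∑ i ∈ Finset.range (n + 1), ω.2.2 i ≤ t} : Set ℕ).Finite := hfin
  simp only [psiMap]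
  rw [if_pos h1]
  show ((chainMap (⇑φ) ((Sset t ω).ncard) (ω.1, ω.2.1)).1,
    (chainMap (⇑φ) ((Sset t ω).ncard) (ω.1, ω.2.1)).2, ω.2.2) = thetaMap φ m ω
  rw [hcard]
  rfl

lemma psi_eq_id (φ : E × G → E × G) {t : ℝ} {ω : Om E G} (hω : ω ∈ TInf t) :
    psiMap φ t ω = ω := by
  have h1 : ¬ ({n : ℕ | ∑ i ∈ Finset.range (n + 1), ω.2.2 i ≤ t} : Set ℕ).Finite := hω
  simp only [psiMap]
  rw [if_neg h1]

lemma theta_mem_TSet (φ : (E × G) ≃ (E × G)) (k : ℕ) {t : ℝ} {m : ℕ} {ω : Om E G} :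
    thetaMap φ k ω ∈ TSet t m ↔ ω ∈ TSet t m := Iff.rfl

lemma psi_preimage (φ : (E × G) ≃ (E × G)) (t : ℝ) (B : Set (Om E G)) :
    psiMap (⇑φ) t ⁻¹' B
      = (⋃ m : ℕ, thetaMap φ m ⁻¹' (B ∩ TSet t m)) ∪ (B ∩ TInf t) := by
  ext ω
  simp only [Set.mem_preimage, Set.mem_union, Set.mem_iUnion, Set.mem_inter_iff]
  constructor
  · intro h
    by_cases hfin : (Sset t ω).Finite
    · left
      refine ⟨(Sset t ω).ncard, ?_, ?_⟩
      · rw [← psi_eq_theta φ ⟨hfin, rfl⟩]; exact h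
      · exact (theta_mem_TSet φ _).2 ⟨hfin, rfl⟩
    · right
      rw [psi_eq_id (⇑φ) hfin] at h
      exact ⟨h, hfin⟩
  · rintro (⟨m, hB, hT⟩ | ⟨hB, hinf⟩)
    · have hωT : ω ∈ TSet t m := (theta_mem_TSet φ m).1 hT
      rw [psi_eq_theta φ hωT]
      exact hB
    · rw [psi_eq_id (⇑φ) hinf]
      exact hB

lemma psi_measurable (φ : (E × G) ≃ (E × G)) (t : ℝ) :
    Measurable (psiMap (⇑φ) t : Om E G → Om E G) := by
  intro B hB
  rw [psi_preimage φ t B]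
  refine MeasurableSet.union ?_ (hB.inter (measurableSet_TInf t))
  exact MeasurableSet.iUnion fun m =>
    measurable_thetaMap φ m (hB.inter (measurableSet_TSet t m))

lemma psi_measurePreserving (φ : (E × G) ≃ (E × G)) (t : ℝ)
    (μ : Measure (Om E G)) [IsProbabilityMeasure μ]
    (hindep : iIndepFun (m := coordMS E G) (coordFun E G) μ)
    (hmargE : Measure.map (fun ω : Om E G => ω.1) μ
      = (Fintype.card E : ENNReal)⁻¹ • Measure.count)
    (hmargG : ∀ n : ℕ, Measure.map (fun ω : Om E G => ω.2.1 n) μ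
      = (Fintype.card G : ENNReal)⁻¹ • Measure.count) :
    MeasurePreserving (psiMap (⇑φ) t) μ μ := by
  refine ⟨psi_measurable φ t, ?_⟩
  refine Measure.ext fun B hB => ?_
  rw [Measure.map_apply (psi_measurable φ t) hB, psi_preimage φ t B]
  have hTmeas : ∀ m : ℕ, MeasurableSet (B ∩ TSet t m) :=
    fun m => hB.inter (measurableSet_TSet t m)
  have hpremeas : ∀ m : ℕ, MeasurableSet (thetaMap φ m ⁻¹' (B ∩ TSet t m)) :=
    fun m => measurable_thetaMap φ m (hTmeas m)
  have hsubT : ∀ m : ℕ, thetaMap φ m ⁻¹' (B ∩ TSet t m) ⊆ TSet t m := by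
    intro m ω hω
    exact (theta_mem_TSet φ m).1 hω.2
  have hdisj1 : Pairwise (Function.onFun Disjoint
      fun m : ℕ => thetaMap φ m ⁻¹' (B ∩ TSet t m)) := by
    intro m m' hmm
    refine Set.disjoint_left.2 fun ω h1 h2 => hmm ?_
    have e1 := (hsubT m h1).2
    have e2 := (hsubT m' h2).2
    rw [← e1, ← e2]
  have hdisj2 : Disjoint (⋃ m : ℕ, thetaMap φ m ⁻¹' (B ∩ TSet t m)) (B ∩ TInf t) := by
    refine Set.disjoint_left.2 fun ω h1 h2 => ?_
    obtain ⟨S, ⟨m, rfl⟩, hS⟩ := h1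
    exact h2.2 (hsubT m hS).1
  rw [measure_union hdisj2 (hB.inter (measurableSet_TInf t)),
    measure_iUnion hdisj1 hpremeas]
  have hpres : ∀ m : ℕ, μ (thetaMap φ m ⁻¹' (B ∩ TSet t m)) = μ (B ∩ TSet t m) :=
    fun m => (thetaMap_measurePreserving φ m μ hindep hmargE hmargG).measure_preimage
      (hTmeas m).nullMeasurableSet
  simp_rw [hpres]
  -- reassemble
  have hdisj1' : Pairwise (Function.onFun Disjoint fun m : ℕ => B ∩ TSet t m) := by
    intro m m' hmm
    refine Set.disjoint_left.2 fun ω h1 h2 => hmm ?_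
    rw [← h1.2.2, ← h2.2.2]
  have hdisj2' : Disjoint (⋃ m : ℕ, B ∩ TSet t m) (B ∩ TInf t) := by
    refine Set.disjoint_left.2 fun ω h1 h2 => ?_
    obtain ⟨S, ⟨m, rfl⟩, hS⟩ := h1
    exact h2.2 hS.2.1
  have hcover : ((⋃ m : ℕ, B ∩ TSet t m) ∪ (B ∩ TInf t)) = B := by
    ext ω
    simp only [Set.mem_union, Set.mem_iUnion, Set.mem_inter_iff]
    constructor
    · rintro (⟨m, h1, _⟩ | ⟨h1, _⟩) <;> exact h1
    · intro h
      by_cases hfin : (Sset t ω).Finite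
      · exact Or.inl ⟨(Sset t ω).ncard, h, hfin, rfl⟩
      · exact Or.inr ⟨h, hfin⟩
  rw [← measure_iUnion hdisj1' (fun m => hTmeas m),
    ← measure_union hdisj2' (hB.inter (measurableSet_TInf t)), hcover]

end Part5

/-- Let `E`, `G` be finite nonempty sets, `φ : E × G → E × G` a
bijection, `λ > 0` and `t ≥ 0`.  On `Ω = E × G^ℕ × ℝ^ℕ`, let `μ` be the product
probability measure `μ_E ⊗ μ_G^{⊗ℕ} ⊗ ν_λ^{⊗ℕ}` (characterized by: all coordinates are
mutually independent, the `E`-coordinate is uniform on `E`, each `G`-coordinate is uniform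
on `G`, and each `ℝ`-coordinate has the exponential law of rate `λ`).  Then `ψ_t` is
measurable and measure-preserving for `μ`, and so is the analogous map built from
`φ⁻¹`. -/
theorem stmt12 {E G : Type} [Fintype E] [Fintype G] [Nonempty E] [Nonempty G]
    [DecidableEq E] [DecidableEq G]
    [mE : MeasurableSpace E] [MeasurableSingletonClass E]
    [mG : MeasurableSpace G] [MeasurableSingletonClass G]
    (φ : (E × G) ≃ (E × G)) (l t : ℝ) (hl : 0 < l) (ht : 0 ≤ t)
    (μ : Measure (E × (ℕ → G) × (ℕ → ℝ))) [IsProbabilityMeasure μ]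
    (hindep : iIndepFun (m := coordMS E G) (coordFun E G) μ)
    (hmargE : Measure.map (fun ω : E × (ℕ → G) × (ℕ → ℝ) => ω.1) μ
      = (Fintype.card E : ENNReal)⁻¹ • Measure.count)
    (hmargG : ∀ n : ℕ, Measure.map (fun ω : E × (ℕ → G) × (ℕ → ℝ) => ω.2.1 n) μ
      = (Fintype.card G : ENNReal)⁻¹ • Measure.count)
    (hmargR : ∀ n : ℕ, Measure.map (fun ω : E × (ℕ → G) × (ℕ → ℝ) => ω.2.2 n) μ
      = MeasureTheory.volume.withDensity
          (fun x => ENNReal.ofReal (if 0 ≤ x then l * Real.exp (-(l * x)) else 0))) :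
    MeasurePreserving (psiMap (⇑φ) t) μ μ ∧
    MeasurePreserving (psiMap (⇑φ.symm) t) μ μ := by
  exact ⟨Part5.psi_measurePreserving φ t μ hindep hmargE hmargG,
    Part5.psi_measurePreserving φ.symm t μ hindep hmargE hmargG⟩
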